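/- If G is a wheel graph or a fan graph of order p, then str(G) = p + δ(G). -/

import Mathlib

open Finset

/-- A numbering of a graph of order `Fintype.card V` is a bijection onto `{1, …, card V}`. -/
def IsNumbering {V : Type*} [Fintype V] (f : V → ℕ) : Prop :=
  Set.BijOn f Set.univ (Set.Icc 1 (Fintype.card V))

/-- The strength `str_f` of a numbering `f` of `G`: the maximum of `f u + f v` over edges. -/
noncomputable def strOf {V : Type*} [Fintype V] (G : SimpleGraph V) (f : V → ℕ) : ℕ :=
  sSup {n | ∃ u v, G.Adj u v ∧ n = f u + f v}

/-- The strength of a graph: the minimum over all numberings `f` of `str_f`. -/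
noncomputable def strength {V : Type*} [Fintype V] (G : SimpleGraph V) : ℕ :=
  sInf {n | ∃ f : V → ℕ, IsNumbering f ∧ strOf G f = n}

open scoped Classical

/-- The cone over a graph: a new vertex (`none`) joined to every vertex of `G`. -/
def coneGraph {α : Type*} (G : SimpleGraph α) : SimpleGraph (Option α) where
  Adj x y :=
    match x, y with
    | none, none => False
    | none, some _ => True
    | some _, none => True
    | some a, some b => G.Adj a b
  symm := by
    refine ⟨?_⟩
    rintro (_ | a) (_ | b) h
    · exact h
    · trivial
    · trivial
    · exact G.adj_symm h
  loopless := by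
    refine ⟨?_⟩
    rintro (_ | a) h
    · exact h
    · exact G.irrefl h

/-- The wheel graph of order `p`: the cone over the cycle `C_{p-1}`. -/
def wheelGraph (p : ℕ) : SimpleGraph (Option (Fin (p - 1))) :=
  coneGraph (SimpleGraph.cycleGraph (p - 1))

/-- The fan graph of order `p`: the cone over the path `P_{p-1}`. -/
def fanGraph (p : ℕ) : SimpleGraph (Option (Fin (p - 1))) :=
  coneGraph (SimpleGraph.pathGraph (p - 1))

-- helper lemmas

section cone
variable {α : Type*} (G : SimpleGraph α)

lemma coneGraph_adj_none_some (a : α) : (coneGraph G).Adj none (some a) := trivial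
lemma coneGraph_adj_some_some (a b : α) : (coneGraph G).Adj (some a) (some b) ↔ G.Adj a b := Iff.rfl

lemma coneGraph_adj_cases {x y : Option α} (h : (coneGraph G).Adj x y) :
    (x = none ∧ ∃ b, y = some b) ∨ (y = none ∧ ∃ a, x = some a) ∨
      (∃ a b, x = some a ∧ y = some b ∧ G.Adj a b) := by
  match x, y with
  | none, none => exact absurd h (by exact id)
  | none, some b => exact Or.inl ⟨rfl, b, rfl⟩
  | some a, none => exact Or.inr (Or.inl ⟨rfl, a, rfl⟩)
  | some a, some b => exact Or.inr (Or.inr ⟨a, b, rfl, rfl, h⟩)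

variable [Fintype α]

lemma coneGraph_degree_some (a : α) : (coneGraph G).degree (some a) = G.degree a + 1 := by
  have h : (coneGraph G).neighborFinset (some a)
      = insert none ((G.neighborFinset a).map Function.Embedding.some) := by
    ext x
    match x with
    | none => exact iff_of_true ((SimpleGraph.mem_neighborFinset _ _ _).mpr trivial) (Finset.mem_insert_self _ _)
    | some b =>
      simp [SimpleGraph.mem_neighborFinset, coneGraph_adj_some_some]
  rw [SimpleGraph.degree, h, Finset.card_insert_of_notMem (by simp), Finset.card_map,
    SimpleGraph.degree, add_comm]

lemma coneGraph_degree_none : (coneGraph G).degree none = Fintype.card α := by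
  have h : (coneGraph G).neighborFinset none = Finset.univ.map Function.Embedding.some := by
    ext x
    match x with
    | none => exact iff_of_false (by intro h; exact (SimpleGraph.mem_neighborFinset _ _ _).mp h) (by simp)
    | some b => simp [SimpleGraph.mem_neighborFinset, coneGraph_adj_none_some]
  rw [SimpleGraph.degree, h, Finset.card_map, Finset.card_univ]

end cone

section strength
variable {V : Type*} [Fintype V] {G : SimpleGraph V}

lemma strOf_eq_of (f : V → ℕ) {m : ℕ} (hmem : ∃ u v, G.Adj u v ∧ m = f u + f v)
    (hub : ∀ u v, G.Adj u v → f u + f v ≤ m) : strOf G f = m := by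
  have hb : m ∈ upperBounds {n | ∃ u v, G.Adj u v ∧ n = f u + f v} := by
    rintro n ⟨u, v, h, rfl⟩; exact hub u v h
  exact le_antisymm (csSup_le ⟨m, hmem⟩ hb) (le_csSup ⟨m, hb⟩ hmem)

lemma strOf_lower {d : ℕ} (hV : 1 ≤ Fintype.card V) (hd : 1 ≤ d)
    (hdeg : ∀ v, d ≤ G.degree v) {f : V → ℕ} (hf : IsNumbering f) :
    Fintype.card V + d ≤ strOf G f := by
  classical
  set p := Fintype.card V with hp
  have hple : ∀ u : V, f u ≤ p := fun u => (hf.mapsTo (Set.mem_univ u)).2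
  have hge : ∀ u : V, 1 ≤ f u := fun u => (hf.mapsTo (Set.mem_univ u)).1
  obtain ⟨v, -, hv⟩ := hf.surjOn (Set.mem_Icc.mpr ⟨hV, le_rfl⟩)
  set S : Finset ℕ := (G.neighborFinset v).image f with hS
  have hcard : S.card = G.degree v := by
    rw [hS, Finset.card_image_of_injOn (fun x _ y _ h => hf.injOn trivial trivial h)]
    rfl
  have hSne : S.Nonempty := by
    rw [← Finset.card_pos, hcard]; exact lt_of_lt_of_le hd (hdeg v)
  set M := S.max' hSne with hM
  obtain ⟨w, hw, hfw⟩ := Finset.mem_image.mp (S.max'_mem hSne)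
  have hsub : S ⊆ Finset.Icc 1 M := by
    intro x hx
    obtain ⟨u, -, rfl⟩ := Finset.mem_image.mp hx
    exact Finset.mem_Icc.mpr ⟨hge u, S.le_max' _ hx⟩
  have hdM : d ≤ M := by
    calc d ≤ G.degree v := hdeg v
    _ = S.card := hcard.symm
    _ ≤ (Finset.Icc 1 M).card := Finset.card_le_card hsub
    _ = M := by rw [Nat.card_Icc]; omega
  have hmem : f v + f w ∈ {n | ∃ u v, G.Adj u v ∧ n = f u + f v} :=
    ⟨v, w, (SimpleGraph.mem_neighborFinset _ _ _).mp hw, rfl⟩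
  have hbdd : BddAbove {n | ∃ u v, G.Adj u v ∧ n = f u + f v} := by
    refine ⟨2 * p, ?_⟩
    rintro n ⟨u, u', -, rfl⟩
    have := hple u; have := hple u'; omega
  have h3 : f v + f w ≤ strOf G f := le_csSup hbdd hmem
  have h4 : p + d ≤ f v + f w := by rw [hv, hfw]; omega
  omega

lemma strength_eq_of {m : ℕ} (f0 : V → ℕ) (h0 : IsNumbering f0) (h0s : strOf G f0 = m)
    (hlow : ∀ f, IsNumbering f → m ≤ strOf G f) : strength G = m := by
  refine le_antisymm (Nat.sInf_le ⟨f0, h0, h0s⟩) (le_csInf ⟨m, f0, h0, h0s⟩ ?_)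
  rintro n ⟨f, hf, rfl⟩
  exact hlow f hf

end strength

lemma cycleGraph_adj_nat {m : ℕ} (hm : 2 ≤ m) {u v : Fin m} :
    (SimpleGraph.cycleGraph m).Adj u v ↔
      (u.val + 1 = v.val ∨ v.val + 1 = u.val ∨ (u.val + 1 = m ∧ v.val = 0) ∨
        (v.val + 1 = m ∧ u.val = 0)) := by
  obtain ⟨n, rfl⟩ : ∃ n, m = n + 2 := ⟨m - 2, by omega⟩
  rw [SimpleGraph.cycleGraph_adj]
  have hu := u.isLt
  have hv := v.isLt
  rw [Fin.ext_iff, Fin.ext_iff, Fin.sub_def, Fin.sub_def]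
  simp only [Fin.val_one]
  have h1 : (n + 2 - v.val + u.val) % (n + 2) = if n + 2 - v.val + u.val < n + 2
      then n + 2 - v.val + u.val else n + 2 - v.val + u.val - (n + 2) := by
    split
    · exact Nat.mod_eq_of_lt (by omega)
    · rw [Nat.mod_eq_sub_mod (by omega), Nat.mod_eq_of_lt (by omega)]
  have h2 : (n + 2 - u.val + v.val) % (n + 2) = if n + 2 - u.val + v.val < n + 2
      then n + 2 - u.val + v.val else n + 2 - u.val + v.val - (n + 2) := by
    split
    · exact Nat.mod_eq_of_lt (by omega)
    · rw [Nat.mod_eq_sub_mod (by omega), Nat.mod_eq_of_lt (by omega)]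
  rw [h1, h2]
  split <;> split <;> omega

lemma coneGraph_adj_some_none {α : Type*} (G : SimpleGraph α) (a : α) :
    (coneGraph G).Adj (some a) none := trivial

def wheelLabel (p : ℕ) : Option (Fin (p - 1)) → ℕ
  | none => 3
  | some j => if j.val = 0 then 1 else if j.val = 2 then 2
      else if j.val % 2 = 1 then p - j.val / 2 else j.val / 2 + 2

def fanLabel (p : ℕ) : Option (Fin (p - 1)) → ℕ
  | none => 1
  | some j => if j.val % 2 = 0 then p - j.val / 2 else j.val / 2 + 2

lemma card_optfin (p : ℕ) (hp : 1 ≤ p) : Fintype.card (Option (Fin (p - 1))) = p := by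
  rw [Fintype.card_option, Fintype.card_fin]; omega

section wheel
variable {p : ℕ} (hp : 4 ≤ p)
include hp

lemma wheelLabel_some_mem (j : Fin (p - 1)) :
    1 ≤ wheelLabel p (some j) ∧ wheelLabel p (some j) ≤ p := by
  have hj := j.isLt
  simp only [wheelLabel, Fin.val_mk]
  split_ifs <;> first | contradiction | omega

lemma wheel_isNumbering : IsNumbering (wheelLabel p) := by
  unfold IsNumbering
  rw [card_optfin p (by omega)]
  refine ⟨?_, ?_, ?_⟩
  · rintro (_ | j) -
    · simp only [wheelLabel, Set.mem_Icc]; omega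
    · have h := wheelLabel_some_mem hp j
      simpa only [Set.mem_Icc] using h
  · rintro (_ | j) - (_ | j') - h
    · rfl
    · exfalso
      have hj := j'.isLt
      simp only [wheelLabel, Fin.val_mk] at h
      split_ifs at h <;> first | contradiction | omega
    · exfalso
      have hj := j.isLt
      simp only [wheelLabel, Fin.val_mk] at h
      split_ifs at h <;> first | contradiction | omega
    · have hj := j.isLt
      have hj' := j'.isLt
      simp only [wheelLabel, Fin.val_mk] at h
      congr 1
      apply Fin.ext
      split_ifs at h <;> first | contradiction | omega
  · intro y hy
    rw [Set.mem_Icc] at hy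
    rcases eq_or_ne y 3 with rfl | h3
    · exact ⟨none, trivial, rfl⟩
    rcases eq_or_ne y 1 with rfl | h1
    · refine ⟨some ⟨0, by omega⟩, trivial, ?_⟩
      simp only [wheelLabel, Fin.val_mk]
      norm_num
    rcases eq_or_ne y 2 with rfl | h2
    · refine ⟨some ⟨2, by omega⟩, trivial, ?_⟩
      simp only [wheelLabel, Fin.val_mk]
      norm_num
    by_cases h4 : 2 * (y - 2) ≤ p - 2
    · refine ⟨some ⟨2 * (y - 2), by omega⟩, trivial, ?_⟩
      simp only [wheelLabel, Fin.val_mk]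
      split_ifs <;> first | contradiction | omega
    · refine ⟨some ⟨2 * (p - y) + 1, by omega⟩, trivial, ?_⟩
      simp only [wheelLabel, Fin.val_mk]
      split_ifs <;> first | contradiction | omega

lemma wheel_strOf : strOf (wheelGraph p) (wheelLabel p) = p + 3 := by
  apply strOf_eq_of
  · refine ⟨none, some ⟨1, by omega⟩, coneGraph_adj_none_some _ _, ?_⟩
    simp only [wheelLabel, Fin.val_mk]
    split_ifs <;> first | contradiction | omega
  · intro u v h
    rcases coneGraph_adj_cases _ h with ⟨rfl, b, rfl⟩ | ⟨rfl, a, rfl⟩ | ⟨a, b, rfl, rfl, hab⟩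
    · have h2 := (wheelLabel_some_mem hp b).2
      show 3 + wheelLabel p (some b) ≤ p + 3
      omega
    · have h2 := (wheelLabel_some_mem hp a).2
      show wheelLabel p (some a) + 3 ≤ p + 3
      omega
    · rw [cycleGraph_adj_nat (by omega)] at hab
      have ha := a.isLt
      have hb := b.isLt
      simp only [wheelLabel, Fin.val_mk]
      split_ifs <;> first | contradiction | omega

lemma wheel_degree_some (a : Fin (p - 1)) : (wheelGraph p).degree (some a) = 3 := by
  classical
  set na : ℕ := if a.val + 1 = p - 1 then 0 else a.val + 1 with hna
  set pa : ℕ := if a.val = 0 then p - 2 else a.val - 1 with hpa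
  have ha := a.isLt
  have hna' : na < p - 1 := by rw [hna]; split_ifs <;> first | contradiction | omega
  have hpa' : pa < p - 1 := by rw [hpa]; split_ifs <;> first | contradiction | omega
  have hnf : (wheelGraph p).neighborFinset (some a)
      = {none, some ⟨na, hna'⟩, some ⟨pa, hpa'⟩} := by
    ext x
    rw [SimpleGraph.mem_neighborFinset]
    match x with
    | none =>
      simp only [Finset.mem_insert, Finset.mem_singleton]
      exact iff_of_true (coneGraph_adj_some_none _ _) (by simp)
    | some b =>
      have hb := b.isLt
      rw [show (wheelGraph p).Adj (some a) (some b)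
          ↔ (SimpleGraph.cycleGraph (p - 1)).Adj a b from Iff.rfl,
        cycleGraph_adj_nat (by omega)]
      simp only [Finset.mem_insert, Finset.mem_singleton, Option.some.injEq, Fin.ext_iff]
      rw [hna, hpa]
      constructor
      · intro h
        split_ifs <;> first | contradiction | omega
      · intro h
        rcases h with h | h | h
        · exact absurd h (by simp)
        · split_ifs at h <;> first | contradiction | omega
        · split_ifs at h <;> first | contradiction | omega
  rw [SimpleGraph.degree, hnf]
  rw [Finset.card_insert_of_notMem (by simp), Finset.card_insert_of_notMem ?_,
    Finset.card_singleton]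
  simp only [Finset.mem_singleton, Option.some.injEq, Fin.ext_iff]
  rw [hna, hpa]
  split_ifs <;> first | contradiction | omega

lemma wheel_degree_ge (v : Option (Fin (p - 1))) : 3 ≤ (wheelGraph p).degree v := by
  match v with
  | none =>
    have : (wheelGraph p).degree none = Fintype.card (Fin (p - 1)) := coneGraph_degree_none _
    rw [this, Fintype.card_fin]
    omega
  | some a => rw [wheel_degree_some hp a]

lemma wheel_minDegree : (wheelGraph p).minDegree = 3 := by
  apply le_antisymm
  · have h := SimpleGraph.minDegree_le_degree (wheelGraph p) (some ⟨0, by omega⟩)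
    rwa [wheel_degree_some hp] at h
  · exact SimpleGraph.le_minDegree_of_forall_le_degree _ 3 (wheel_degree_ge hp)

lemma wheel_strength : strength (wheelGraph p) = p + 3 := by
  apply strength_eq_of (wheelLabel p) (wheel_isNumbering hp) (wheel_strOf hp)
  intro f hf
  have h := strOf_lower (G := wheelGraph p) (d := 3)
    (by rw [card_optfin p (by omega)]; omega) (by omega) (wheel_degree_ge hp) hf
  rwa [card_optfin p (by omega)] at h

end wheel

section fan
variable {p : ℕ} (hp : 3 ≤ p)
include hp

lemma fanLabel_some_mem (j : Fin (p - 1)) :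
    1 ≤ fanLabel p (some j) ∧ fanLabel p (some j) ≤ p := by
  have hj := j.isLt
  simp only [fanLabel, Fin.val_mk]
  split_ifs <;> first | contradiction | omega

lemma fan_isNumbering : IsNumbering (fanLabel p) := by
  unfold IsNumbering
  rw [card_optfin p (by omega)]
  refine ⟨?_, ?_, ?_⟩
  · rintro (_ | j) -
    · simp only [fanLabel, Set.mem_Icc]; omega
    · have h := fanLabel_some_mem hp j
      simpa only [Set.mem_Icc] using h
  · rintro (_ | j) - (_ | j') - h
    · rfl
    · exfalso
      have hj := j'.isLt
      simp only [fanLabel, Fin.val_mk] at h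
      split_ifs at h <;> first | contradiction | omega
    · exfalso
      have hj := j.isLt
      simp only [fanLabel, Fin.val_mk] at h
      split_ifs at h <;> first | contradiction | omega
    · have hj := j.isLt
      have hj' := j'.isLt
      simp only [fanLabel, Fin.val_mk] at h
      congr 1
      apply Fin.ext
      split_ifs at h <;> first | contradiction | omega
  · intro y hy
    rw [Set.mem_Icc] at hy
    rcases eq_or_ne y 1 with rfl | h1
    · exact ⟨none, trivial, rfl⟩
    by_cases h4 : 2 * (p - y) ≤ p - 2
    · refine ⟨some ⟨2 * (p - y), by omega⟩, trivial, ?_⟩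
      simp only [fanLabel, Fin.val_mk]
      split_ifs <;> first | contradiction | omega
    · refine ⟨some ⟨2 * (y - 2) + 1, by omega⟩, trivial, ?_⟩
      simp only [fanLabel, Fin.val_mk]
      split_ifs <;> first | contradiction | omega

lemma fan_strOf : strOf (fanGraph p) (fanLabel p) = p + 2 := by
  apply strOf_eq_of
  · refine ⟨some ⟨0, by omega⟩, some ⟨1, by omega⟩, ?_, ?_⟩
    · rw [show (fanGraph p).Adj (some ⟨0, by omega⟩) (some ⟨1, by omega⟩)
        ↔ (SimpleGraph.pathGraph (p - 1)).Adj ⟨0, by omega⟩ ⟨1, by omega⟩ from Iff.rfl,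
        SimpleGraph.pathGraph_adj]
      left; rfl
    · simp only [fanLabel, Fin.val_mk]
      split_ifs <;> first | contradiction | omega
  · intro u v h
    rcases coneGraph_adj_cases _ h with ⟨rfl, b, rfl⟩ | ⟨rfl, a, rfl⟩ | ⟨a, b, rfl, rfl, hab⟩
    · have h2 := (fanLabel_some_mem hp b).2
      show 1 + fanLabel p (some b) ≤ p + 2
      omega
    · have h2 := (fanLabel_some_mem hp a).2
      show fanLabel p (some a) + 1 ≤ p + 2
      omega
    · rw [SimpleGraph.pathGraph_adj] at hab
      have ha := a.isLt
      have hb := b.isLt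
      simp only [fanLabel, Fin.val_mk]
      split_ifs <;> first | contradiction | omega

lemma fan_degree_ge (v : Option (Fin (p - 1))) : 2 ≤ (fanGraph p).degree v := by
  classical
  match v with
  | none =>
    have : (fanGraph p).degree none = Fintype.card (Fin (p - 1)) := coneGraph_degree_none _
    rw [this, Fintype.card_fin]
    omega
  | some a =>
    have ha := a.isLt
    set nb : ℕ := if a.val = 0 then 1 else a.val - 1 with hnb
    have hnb' : nb < p - 1 := by rw [hnb]; split_ifs <;> first | contradiction | omega
    have hsub : ({none, some ⟨nb, hnb'⟩} : Finset (Option (Fin (p - 1))))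
        ⊆ (fanGraph p).neighborFinset (some a) := by
      intro x hx
      simp only [Finset.mem_insert, Finset.mem_singleton] at hx
      rw [SimpleGraph.mem_neighborFinset]
      rcases hx with rfl | rfl
      · exact coneGraph_adj_some_none _ _
      · rw [show (fanGraph p).Adj (some a) (some ⟨nb, hnb'⟩)
          ↔ (SimpleGraph.pathGraph (p - 1)).Adj a ⟨nb, hnb'⟩ from Iff.rfl,
          SimpleGraph.pathGraph_adj]
        simp only [hnb]
        split_ifs <;> first | contradiction | omega
    have hcard : ({none, some ⟨nb, hnb'⟩} : Finset (Option (Fin (p - 1)))).card = 2 := by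
      rw [Finset.card_insert_of_notMem (by simp), Finset.card_singleton]
    calc 2 = ({none, some ⟨nb, hnb'⟩} : Finset (Option (Fin (p - 1)))).card := hcard.symm
    _ ≤ _ := Finset.card_le_card hsub

lemma fan_degree_zero (a : Fin (p - 1)) (h0 : a.val = 0) : (fanGraph p).degree (some a) = 2 := by
  classical
  have hnf : (fanGraph p).neighborFinset (some a)
      = {none, some ⟨1, by omega⟩} := by
    ext x
    rw [SimpleGraph.mem_neighborFinset]
    match x with
    | none =>
      simp only [Finset.mem_insert, Finset.mem_singleton]
      exact iff_of_true (coneGraph_adj_some_none _ _) (by simp)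
    | some b =>
      have hb := b.isLt
      rw [show (fanGraph p).Adj (some a) (some b)
          ↔ (SimpleGraph.pathGraph (p - 1)).Adj a b from Iff.rfl,
        SimpleGraph.pathGraph_adj]
      simp only [Finset.mem_insert, Finset.mem_singleton, Option.some.injEq, Fin.ext_iff]
      constructor
      · intro h; right; omega
      · rintro (h | h)
        · exact absurd h (by simp)
        · omega
  rw [SimpleGraph.degree, hnf, Finset.card_insert_of_notMem (by simp), Finset.card_singleton]

lemma fan_minDegree : (fanGraph p).minDegree = 2 := by
  apply le_antisymm
  · have h := SimpleGraph.minDegree_le_degree (fanGraph p) (some ⟨0, by omega⟩)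
    rwa [fan_degree_zero hp _ rfl] at h
  · exact SimpleGraph.le_minDegree_of_forall_le_degree _ 2 (fan_degree_ge hp)

lemma fan_strength : strength (fanGraph p) = p + 2 := by
  apply strength_eq_of (fanLabel p) (fan_isNumbering hp) (fan_strOf hp)
  intro f hf
  have h := strOf_lower (G := fanGraph p) (d := 2)
    (by rw [card_optfin p (by omega)]; omega) (by omega) (fan_degree_ge hp) hf
  rwa [card_optfin p (by omega)] at h

end fan

/-- A wheel or fan graph `G` of order `p` has `str(G) = p + δ(G)`. -/
theorem strength_wheel_fan (p : ℕ) :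
    (4 ≤ p → strength (wheelGraph p) = p + (wheelGraph p).minDegree) ∧
    (3 ≤ p → strength (fanGraph p) = p + (fanGraph p).minDegree) := by
  constructor
  · intro hp
    rw [wheel_minDegree hp, wheel_strength hp]
  · intro hp
    rw [fan_minDegree hp, fan_strength hp]
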